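/- Let a ∈ [0,1/2), t ∈ (0,1/2), δ > 0, r > 0 with t ≤ a and a + δr ≤ 1. Then t'/(2(a+δr)) − t/(2a) ≤ δ/r whenever 0 ≤ t' ≤ t + δ√(8t) + 2δ². -/
import Mathlib


theorem ell_perturbation_mid_case (a t t' δ r : ℝ)
    (ha : a ∈ Set.Ico (0:ℝ) (1/2)) (ht : t ∈ Set.Ioo (0:ℝ) (1/2))
    (hδ : 0 < δ) (hr : 0 < r) (hta : t ≤ a) (har : a + δ*r ≤ 1)
    (ht'0 : 0 ≤ t') (ht' : t' ≤ t + δ*Real.sqrt (8*t) + 2*δ^2) :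
    t'/(2*(a + δ*r)) - t/(2*a) ≤ δ/r := by
  have ha0 : 0 < a := ht.1.trans_le hta
  have hd : 0 < a + δ*r := by positivity
  set s := Real.sqrt (8*t) with hs
  have hs0 : 0 ≤ s := Real.sqrt_nonneg _
  have hs2 : s^2 = 8*t := Real.sq_sqrt (by nlinarith [ht.1])
  rw [div_sub_div _ _ (by positivity : (2*(a+δ*r)) ≠ 0) (by positivity : (2*a) ≠ 0),
      div_le_div_iff₀ (by positivity) hr]
  have key : a*r*s ≤ 2*a^2 + r^2*t := by nlinarith [sq_nonneg (r*s - 4*a)]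
  have key2 : δ*(a*r*s) ≤ δ*(2*a^2 + r^2*t) :=
    mul_le_mul_of_nonneg_left key hδ.le
  have h3 : t'*(2*a)*r ≤ (t + δ*s + 2*δ^2)*(2*a)*r := by
    have := mul_le_mul_of_nonneg_right ht' (by positivity : (0:ℝ) ≤ 2*a*r)
    nlinarith
  nlinarith [mul_pos hδ hr, mul_pos ha0 hr]
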